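/- Under the stated conditions, the composite function g(x₁,x₂,(h̃,a,v₁),e) := ψ(φ(x₁,v₁,a), φ(x₂,h̃,e,a)) is continuously differentiable in (x₂,e) with ∂_e g = ∂_{y₂}ψ · ∂_e φ ≥ 1/(KC) and ‖∂_{x₂} g‖ = ∂_{y₂}ψ · ‖∂_x φ‖ ≤ KC; hence, if the conditional density of Ỹ = ψ(Y₁,Y₂) given X₁ = x₁, X₂ = x₂ is positive everywhere, then for every τ ∈ (0,1) the conditional τ-quantile q̃(τ,x₁,x₂) of Ỹ given X₁ = x₁, X₂ = x₂ exists, is continuously differentiable in x₂, and ∂_{x₂} q̃(τ,x₁,x₂) equals the conditional average of ∂_{y₂}ψ(Y₁,Y₂) · ∂_x φ(x₂,V₂,A) given Ỹ = q̃(τ,x₁,x₂), X₁ = x₁, X₂ = x₂, expressed as the ratio −∂_{x₂}H̃(q̃,x₂)/∂_yH̃(q̃,x₂) of the derivatives of the conditional CDF H̃ of Ỹ. -/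

import Mathlib

open MeasureTheory Filter Metric Set Function Topology ContinuousLinearMap

noncomputable section

section Slice
variable {P : Type*} [NormedAddCommGroup P] [NormedSpace ℝ P]

lemma hasDerivAt_slice {F : P × ℝ → ℝ} {L : P × ℝ →L[ℝ] ℝ} {x : P} {t : ℝ}
    (hF : HasFDerivAt F L (x, t)) : HasDerivAt (fun s => F (x, s)) (L (0, 1)) t :=
  hF.comp_hasDerivAt t ((hasDerivAt_const _ _).prodMk (hasDerivAt_id _))

lemma hasFDerivAt_slice₁ {F : P × ℝ → ℝ} {L : P × ℝ →L[ℝ] ℝ} {x : P} {t : ℝ}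
    (hF : HasFDerivAt F L (x, t)) :
    HasFDerivAt (fun z => F (z, t))
      (L.comp ((ContinuousLinearMap.id ℝ P).prod 0)) x :=
  hF.comp x ((hasFDerivAt_id x).prodMk (hasFDerivAt_const t x))

lemma apply_pair (L : P × ℝ →L[ℝ] ℝ) (ξ : P) (η : ℝ) :
    L (ξ, η) = L (ξ, 0) + η * L (0, 1) := by
  have : ((ξ, η) : P × ℝ) = (ξ, 0) + η • ((0 : P), (1 : ℝ)) := by
    simp [Prod.ext_iff]
  rw [this, map_add, _root_.map_smul, smul_eq_mul]

end Slice

section ImplicitGlobal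
variable {P : Type*} [NormedAddCommGroup P] [NormedSpace ℝ P] [CompleteSpace P]

theorem implicit_global (F : P × ℝ → ℝ) (hF : ContDiff ℝ 1 F)
    (hd : ∀ q : P × ℝ, 0 < deriv (fun t => F (q.1, t)) q.2)
    (c : ℝ) (hex : ∀ x : P, ∃ t, F (x, t) = c) :
    ∃ r : P → ℝ, ContDiff ℝ 1 r ∧ (∀ x, F (x, r x) = c) ∧
      (∀ x t, F (x, t) = c → t = r x) ∧
      ∀ x, fderiv ℝ r x
        = -(deriv (fun t => F (x, t)) (r x))⁻¹ • fderiv ℝ (fun z => F (z, r x)) x := by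
  have hdiff : Differentiable ℝ F := hF.differentiable one_ne_zero
  have hL : ∀ q : P × ℝ, HasFDerivAt F (fderiv ℝ F q) q := fun q => (hdiff q).hasFDerivAt
  have hpar : ∀ x t, deriv (fun s => F (x, s)) t = fderiv ℝ F (x, t) (0, 1) := by
    intro x t; exact (hasDerivAt_slice (hL (x, t))).deriv
  have hdval : ∀ x t, 0 < fderiv ℝ F (x, t) (0, 1) := by
    intro x t; rw [← hpar]; exact hd (x, t)
  have hmono : ∀ x : P, StrictMono (fun t => F (x, t)) := by
    intro x
    exact strictMono_of_deriv_pos (fun t => hd (x, t))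
  choose r hr using hex
  have uniq : ∀ x t, F (x, t) = c → t = r x := by
    intro x t ht
    exact (hmono x).injective (ht.trans (hr x).symm)
  have smooth : ∀ x₀ : P, ContDiffAt ℝ 1 r x₀ := by
    intro x₀
    set q₀ : P × ℝ := (x₀, r x₀) with hq₀
    set L : P × ℝ →L[ℝ] ℝ := fderiv ℝ F q₀ with hLdef
    set d : ℝ := L (0, 1) with hddef
    have hd0 : 0 < d := hdval x₀ (r x₀)
    have hdne : d ≠ 0 := ne_of_gt hd0
    set Φ : P × ℝ → P × ℝ := fun q => (q.1, F q) with hΦdef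
    have hΦ : ContDiff ℝ 1 Φ := contDiff_fst.prodMk hF
    set f₁ : (P × ℝ) →L[ℝ] (P × ℝ) := (ContinuousLinearMap.fst ℝ P ℝ).prod L with hf₁
    set A₀ : (P × ℝ) →L[ℝ] ℝ :=
      L.comp ((ContinuousLinearMap.fst ℝ P ℝ).prod 0) with hA₀
    set f₂ : (P × ℝ) →L[ℝ] (P × ℝ) :=
      (ContinuousLinearMap.fst ℝ P ℝ).prod
        (d⁻¹ • ((ContinuousLinearMap.snd ℝ P ℝ) - A₀)) with hf₂
    have h₁ : Function.LeftInverse f₂ f₁ := by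
      rintro ⟨ξ, η⟩
      have := apply_pair L ξ η
      simp only [hf₂, hf₁, hA₀, ContinuousLinearMap.prod_apply,
        ContinuousLinearMap.coe_fst', ContinuousLinearMap.smul_apply,
        ContinuousLinearMap.sub_apply, ContinuousLinearMap.coe_snd',
        ContinuousLinearMap.comp_apply, ContinuousLinearMap.zero_apply]
      refine Prod.ext rfl ?_
      simp only [this]
      rw [smul_eq_mul, ← hddef]
      field_simp
      ring
    have h₂ : Function.RightInverse f₂ f₁ := by
      rintro ⟨ξ, ζ⟩
      simp only [hf₂, hf₁, hA₀, ContinuousLinearMap.prod_apply,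
        ContinuousLinearMap.coe_fst', ContinuousLinearMap.smul_apply,
        ContinuousLinearMap.sub_apply, ContinuousLinearMap.coe_snd',
        ContinuousLinearMap.comp_apply, ContinuousLinearMap.zero_apply]
      refine Prod.ext rfl ?_
      rw [apply_pair L ξ (d⁻¹ • (ζ - L (ξ, 0)))]
      rw [smul_eq_mul, ← hddef]
      field_simp
      ring
    set Aeq : (P × ℝ) ≃L[ℝ] (P × ℝ) := ContinuousLinearEquiv.equivOfInverse f₁ f₂ h₁ h₂
    have hΦd : HasFDerivAt Φ (Aeq : (P × ℝ) →L[ℝ] (P × ℝ)) q₀ := by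
      have : HasFDerivAt Φ f₁ q₀ := (hasFDerivAt_fst).prodMk (hL q₀)
      exact this
    have hCA : ContDiffAt ℝ 1 Φ q₀ := hΦ.contDiffAt
    have hV : ContDiffAt ℝ 1 (hCA.localInverse hΦd one_ne_zero) (Φ q₀) :=
      hCA.to_localInverse hΦd one_ne_zero
    set V := hCA.localInverse hΦd one_ne_zero with hVdef
    have hrinv : ∀ᶠ z in 𝓝 (Φ q₀), Φ (V z) = z :=
      (hCA.hasStrictFDerivAt' hΦd one_ne_zero).eventually_right_inverse
    have hΦq₀ : Φ q₀ = (x₀, c) := by simp [hΦdef, hq₀, hr x₀]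
    have hmem : ∀ᶠ x in 𝓝 x₀, Φ (V (x, c)) = (x, c) := by
      have hcont : ContinuousAt (fun x : P => ((x, c) : P × ℝ)) x₀ :=
        (continuous_id.prodMk continuous_const).continuousAt
      have := hcont.tendsto.eventually (hΦq₀ ▸ hrinv)
      simpa using this
    have key : ∀ᶠ x in 𝓝 x₀, r x = (V (x, c)).2 := by
      refine hmem.mono fun x hx => ?_
      have h1 : (V (x, c)).1 = x := congrArg Prod.fst hx
      have h2 : F (V (x, c)) = c := congrArg Prod.snd hx
      rw [← Prod.mk.eta (p := V (x, c)), h1] at h2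
      exact (uniq x _ h2).symm
    have hVx : ContDiffAt ℝ 1 (fun x : P => (V (x, c)).2) x₀ := by
      have hinner : ContDiffAt ℝ 1 (fun x : P => ((x, c) : P × ℝ)) x₀ :=
        (contDiff_id.prodMk contDiff_const).contDiffAt
      have hVat : ContDiffAt ℝ 1 V (x₀, c) := hΦq₀ ▸ hV
      exact contDiffAt_snd.comp x₀ (hVat.comp x₀ hinner)
    exact hVx.congr_of_eventuallyEq key
  have hrC : ContDiff ℝ 1 r := contDiff_iff_contDiffAt.2 smooth
  refine ⟨r, hrC, hr, uniq, ?_⟩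
  intro x
  have hrd : HasFDerivAt r (fderiv ℝ r x) x :=
    ((hrC.differentiable one_ne_zero) x).hasFDerivAt
  set L' : P × ℝ →L[ℝ] ℝ := fderiv ℝ F (x, r x) with hL'
  have hcomp : HasFDerivAt (fun z => F (z, r z))
      (L'.comp ((ContinuousLinearMap.id ℝ P).prod (fderiv ℝ r x))) x :=
    (hL (x, r x)).comp x ((hasFDerivAt_id x).prodMk hrd)
  have hconst : (fun z => F (z, r z)) = fun _ => c := funext hr
  have hzero : L'.comp ((ContinuousLinearMap.id ℝ P).prod (fderiv ℝ r x)) = 0 := by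
    have h0 : HasFDerivAt (fun z : P => F (z, r z)) (0 : P →L[ℝ] ℝ) x := by
      rw [hconst]; exact hasFDerivAt_const c x
    exact hcomp.unique h0
  have hdeq : deriv (fun t => F (x, t)) (r x) = L' (0, 1) :=
    (hasDerivAt_slice (hL (x, r x))).deriv
  have hAeq : fderiv ℝ (fun z => F (z, r x)) x
      = L'.comp ((ContinuousLinearMap.id ℝ P).prod 0) :=
    (hasFDerivAt_slice₁ (hL (x, r x))).fderiv
  have hd0 : (0 : ℝ) < L' (0, 1) := hdval x (r x)
  rw [hdeq, hAeq]
  ext ξ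
  have happ : L' (ξ, fderiv ℝ r x ξ) = 0 := by
    have := congrFun (congrArg DFunLike.coe hzero) ξ
    simpa using this
  rw [apply_pair L' ξ (fderiv ℝ r x ξ)] at happ
  have : fderiv ℝ r x ξ = -(L' (0, 1))⁻¹ * L' (ξ, 0) := by
    field_simp at happ ⊢
    linarith
  simpa using this

end ImplicitGlobal

section PerShock
variable {E : Type*} [NormedAddCommGroup E] [NormedSpace ℝ E] [CompleteSpace E]

theorem cdf_slice (G : E × ℝ → ℝ) (hG : ContDiff ℝ 1 G)
    (δ0 M : ℝ) (hδ0 : 0 < δ0)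
    (hGe : ∀ (x : E) (e : ℝ), δ0 ≤ deriv (fun t => G (x, t)) e)
    (hGx : ∀ (x : E) (e : ℝ), ‖fderiv ℝ (fun z => G (z, e)) x‖ ≤ M)
    (f : ℝ → ℝ) (hf_cont : Continuous f) (hf_nonneg : ∀ e, 0 ≤ f e)
    (B : ℝ) (hfB : ∀ e, f e ≤ B) (hf_int : Integrable f) :
    (ContDiff ℝ 1 (fun q : ℝ × E => ∫ e, if G (q.2, e) ≤ q.1 then f e else 0)) ∧
    (∀ q : ℝ × E, ‖fderiv ℝ (fun q' : ℝ × E => ∫ e, if G (q'.2, e) ≤ q'.1 then f e else 0) q‖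
        ≤ B * ((1 + M) / δ0)) ∧
    (∀ q : ℝ × E, 0 ≤ (∫ e, if G (q.2, e) ≤ q.1 then f e else 0)) ∧
    (∀ q : ℝ × E, (∫ e, if G (q.2, e) ≤ q.1 then f e else 0) ≤ ∫ e, f e) ∧
    (∀ x : E, Tendsto (fun y => ∫ e, if G (x, e) ≤ y then f e else 0) atTop (𝓝 (∫ e, f e))) ∧
    (∀ x : E, Tendsto (fun y => ∫ e, if G (x, e) ≤ y then f e else 0) atBot (𝓝 0)) := by
  -- slices of G
  have hGslice : ∀ x : E, ContDiff ℝ 1 (fun t => G (x, t)) := fun x =>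
    hG.comp (contDiff_const.prodMk contDiff_id)
  have hGslice₁ : ∀ e : ℝ, ContDiff ℝ 1 (fun z : E => G (z, e)) := fun e =>
    hG.comp (contDiff_id.prodMk contDiff_const)
  have hGcont : ∀ x : E, Continuous (fun t => G (x, t)) := fun x => (hGslice x).continuous
  have hGdiff : ∀ (x : E) (t : ℝ), HasDerivAt (fun s => G (x, s))
      (deriv (fun s => G (x, s)) t) t := fun x t =>
    (((hGslice x).differentiable one_ne_zero) t).hasDerivAt
  -- mean value growth
  have hgrow : ∀ (x : E) (a b : ℝ), a ≤ b → δ0 * (b - a) ≤ G (x, b) - G (x, a) := by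
    intro x a b hab
    rcases eq_or_lt_of_le hab with rfl | hlt
    · simp
    obtain ⟨ξ, _, hξ⟩ := exists_hasDerivAt_eq_slope (fun s => G (x, s))
      (fun s => deriv (fun s' => G (x, s')) s) hlt ((hGcont x).continuousOn)
      (fun t _ => hGdiff x t)
    have h1 : δ0 ≤ (G (x, b) - G (x, a)) / (b - a) := hξ ▸ hGe x ξ
    have h2 : 0 < b - a := sub_pos.2 hlt
    calc δ0 * (b - a) ≤ ((G (x, b) - G (x, a)) / (b - a)) * (b - a) := by
          exact mul_le_mul_of_nonneg_right h1 h2.le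
      _ = G (x, b) - G (x, a) := by field_simp
  have hmono : ∀ x : E, StrictMono (fun t => G (x, t)) := fun x =>
    strictMono_of_deriv_pos (fun t => lt_of_lt_of_le hδ0 (hGe x t))
  have hsurj : ∀ x : E, Function.Surjective (fun t => G (x, t)) := by
    intro x
    refine (hGcont x).surjective ?_ ?_
    · apply tendsto_atTop_mono' _ _
        ((tendsto_atTop_add_const_left _ (G (x, 0) - δ0 * 0)
          (Tendsto.const_mul_atTop hδ0 tendsto_id)))
      filter_upwards [eventually_ge_atTop (0:ℝ)] with t ht
      have := hgrow x 0 t ht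
      simp only [id_eq]
      nlinarith
    · rw [tendsto_atBot]
      intro b
      filter_upwards [eventually_le_atBot (min 0 ((b - G (x, 0)) / δ0))] with t ht
      have ht0 : t ≤ 0 := le_trans ht (min_le_left _ _)
      have := hgrow x t 0 ht0
      have h2 : t ≤ (b - G (x, 0)) / δ0 := le_trans ht (min_le_right _ _)
      have h3 : δ0 * t ≤ b - G (x, 0) := by
        have := mul_le_mul_of_nonneg_left h2 hδ0.le
        calc δ0 * t ≤ δ0 * ((b - G (x, 0)) / δ0) := this
          _ = b - G (x, 0) := by field_simp
      nlinarith
  -- the implicit inverse e*(y, x)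
  obtain ⟨estar, hestarC, hestar_eq0, hestar_uniq0, hestar_fderiv0⟩ :=
    implicit_global (P := ℝ × E) (fun z => G (z.1.2, z.2) - z.1.1)
      ((hG.comp ((contDiff_snd.comp contDiff_fst).prodMk contDiff_snd)).sub
        (contDiff_fst.comp contDiff_fst))
      (by
        intro q
        have : (fun t => G (q.1.2, t) - q.1.1) = fun t => (fun s => G (q.1.2, s)) t - q.1.1 :=
          rfl
        rw [this, deriv_sub_const]
        exact lt_of_lt_of_le hδ0 (hGe q.1.2 q.2))
      0
      (by
        intro q
        obtain ⟨t, ht⟩ := hsurj q.2 q.1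
        exact ⟨t, by simpa [sub_eq_zero] using ht⟩)
  have hestar_eq : ∀ q : ℝ × E, G (q.2, estar q) - q.1 = 0 := hestar_eq0
  have hestar_uniq : ∀ (q : ℝ × E) (t : ℝ), G (q.2, t) - q.1 = 0 → t = estar q := hestar_uniq0
  have hestar_fderiv : ∀ q : ℝ × E, fderiv ℝ estar q
      = -(deriv (fun t => G (q.2, t) - q.1) (estar q))⁻¹ •
        fderiv ℝ (fun z : ℝ × E => G (z.2, estar q) - z.1) q := hestar_fderiv0
  clear hestar_eq0 hestar_uniq0 hestar_fderiv0
  have hiff : ∀ (q : ℝ × E) (e : ℝ), (G (q.2, e) ≤ q.1 ↔ e ≤ estar q) := by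
    intro q e
    have h1 : G (q.2, estar q) = q.1 := by
      have := hestar_eq q; linarith [this]
    constructor
    · intro h
      exact ((hmono q.2).le_iff_le).1 (by rw [h1]; exact h)
    · intro h
      have := ((hmono q.2).le_iff_le).2 h
      rw [h1] at this; exact this
  -- rewrite the integrand
  have hW_eq : ∀ q : ℝ × E, (∫ e, if G (q.2, e) ≤ q.1 then f e else 0)
      = ∫ e in Iic (estar q), f e := by
    intro q
    rw [← integral_indicator measurableSet_Iic]
    congr 1
    funext e
    simp only [indicator_apply, mem_Iic, hiff q e]
  -- the one-dimensional CDF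
  set Fc : ℝ → ℝ := fun t => ∫ e in Iic t, f e with hFcdef
  have hFc_deriv : ∀ t, HasDerivAt Fc (f t) t := by
    intro t
    have key : ∀ s, Fc s = Fc 0 + ∫ u in (0:ℝ)..s, f u := by
      intro s
      have := intervalIntegral.integral_Iic_sub_Iic (hf_int.integrableOn (s := Iic 0))
        (hf_int.integrableOn (s := Iic s))
      simp only [hFcdef]
      linarith [this]
    have h2 : HasDerivAt (fun s => Fc 0 + ∫ u in (0:ℝ)..s, f u) (f t) t := by
      refine HasDerivAt.const_add _ ?_
      exact intervalIntegral.integral_hasDerivAt_right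
        hf_int.intervalIntegrable
        hf_cont.stronglyMeasurable.stronglyMeasurableAtFilter
        hf_cont.continuousAt
    exact h2.congr_of_eventuallyEq (Filter.Eventually.of_forall key)
  have hFcC : ContDiff ℝ 1 Fc := by
    rw [contDiff_one_iff_deriv]
    constructor
    · exact fun t => (hFc_deriv t).differentiableAt
    · have : deriv Fc = f := funext fun t => (hFc_deriv t).deriv
      rw [this]; exact hf_cont
  -- W as composition
  have hWcomp : (fun q : ℝ × E => ∫ e, if G (q.2, e) ≤ q.1 then f e else 0)
      = Fc ∘ estar := funext fun q => hW_eq q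
  have hWC : ContDiff ℝ 1 (fun q : ℝ × E => ∫ e, if G (q.2, e) ≤ q.1 then f e else 0) := by
    rw [hWcomp]; exact hFcC.comp hestarC
  -- bound on fderiv estar
  have hestar_bd : ∀ q : ℝ × E, ‖fderiv ℝ estar q‖ ≤ (1 + M) / δ0 := by
    intro q
    rw [hestar_fderiv q]
    set d : ℝ := deriv (fun t => G (q.2, t) - q.1) (estar q) with hddef
    have hd : δ0 ≤ d := by
      have heq : (fun t => G (q.2, t) - q.1) = fun t => (fun s => G (q.2, s)) t - q.1 := rfl
      rw [hddef, heq, deriv_sub_const]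
      exact hGe q.2 (estar q)
    have hd0 : 0 < d := lt_of_lt_of_le hδ0 hd
    -- the slice derivative in the (y,x) variables
    have hA : HasFDerivAt (fun z : ℝ × E => G (z.2, estar q) - z.1)
        (((fderiv ℝ (fun x => G (x, estar q)) q.2).comp
          (ContinuousLinearMap.snd ℝ ℝ E)) - ContinuousLinearMap.fst ℝ ℝ E) q := by
      have h1 : HasFDerivAt (fun z : ℝ × E => G (z.2, estar q))
          ((fderiv ℝ (fun x => G (x, estar q)) q.2).comp (ContinuousLinearMap.snd ℝ ℝ E)) q :=
        ((((hGslice₁ (estar q)).differentiable one_ne_zero) q.2).hasFDerivAt).comp q hasFDerivAt_snd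
      exact h1.sub (hasFDerivAt_fst (𝕜 := ℝ) (p := q))
    have hAnorm : ‖fderiv ℝ (fun z : ℝ × E => G (z.2, estar q) - z.1) q‖ ≤ M + 1 := by
      rw [hA.fderiv]
      refine (norm_sub_le _ _).trans ?_
      have h1 : ‖(fderiv ℝ (fun x => G (x, estar q)) q.2).comp
          (ContinuousLinearMap.snd ℝ ℝ E)‖ ≤ M := by
        refine (ContinuousLinearMap.opNorm_comp_le _ _).trans ?_
        calc ‖fderiv ℝ (fun x => G (x, estar q)) q.2‖ * ‖ContinuousLinearMap.snd ℝ ℝ E‖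
            ≤ M * 1 := by
              apply mul_le_mul (hGx q.2 (estar q)) (ContinuousLinearMap.norm_snd_le ℝ ℝ E)
                (norm_nonneg _) ((norm_nonneg _).trans (hGx q.2 (estar q)))
          _ = M := mul_one M
      have h2 : ‖ContinuousLinearMap.fst ℝ ℝ E‖ ≤ 1 := ContinuousLinearMap.norm_fst_le ℝ ℝ E
      linarith
    rw [norm_smul]
    have : ‖-d⁻¹‖ = d⁻¹ := by
      rw [norm_neg, Real.norm_eq_abs, abs_of_pos (inv_pos.2 hd0)]
    rw [this]
    calc d⁻¹ * ‖fderiv ℝ (fun z : ℝ × E => G (z.2, estar q) - z.1) q‖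
        ≤ δ0⁻¹ * (M + 1) := by
          apply mul_le_mul (by exact inv_anti₀ hδ0 hd) hAnorm (norm_nonneg _)
            (inv_nonneg.2 hδ0.le)
      _ = (1 + M) / δ0 := by rw [div_eq_mul_inv]; ring
  -- bound on fderiv W
  have hWbd : ∀ q : ℝ × E,
      ‖fderiv ℝ (fun q' : ℝ × E => ∫ e, if G (q'.2, e) ≤ q'.1 then f e else 0) q‖
        ≤ B * ((1 + M) / δ0) := by
    intro q
    rw [hWcomp]
    have hder : HasFDerivAt (Fc ∘ estar) (f (estar q) • fderiv ℝ estar q) q :=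
      (hFc_deriv (estar q)).comp_hasFDerivAt q
        (((hestarC.differentiable one_ne_zero) q).hasFDerivAt)
    rw [hder.fderiv, norm_smul, Real.norm_eq_abs, abs_of_nonneg (hf_nonneg _)]
    exact mul_le_mul (hfB (estar q)) (hestar_bd q) (norm_nonneg _)
      ((hf_nonneg (estar q)).trans (hfB (estar q)))
  -- basic bounds on W
  have hW_nonneg : ∀ q : ℝ × E, 0 ≤ (∫ e, if G (q.2, e) ≤ q.1 then f e else 0) := by
    intro q
    apply integral_nonneg
    intro e
    by_cases h : G (q.2, e) ≤ q.1 <;> simp [h, hf_nonneg e]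
  have hint_ind : ∀ q : ℝ × E, Integrable (fun e => if G (q.2, e) ≤ q.1 then f e else 0) := by
    intro q
    have : (fun e => if G (q.2, e) ≤ q.1 then f e else 0)
        = Set.indicator (Iic (estar q)) f := by
      funext e
      simp only [indicator_apply, mem_Iic, hiff q e]
    rw [this]
    exact hf_int.indicator measurableSet_Iic
  have hW_le : ∀ q : ℝ × E, (∫ e, if G (q.2, e) ≤ q.1 then f e else 0) ≤ ∫ e, f e := by
    intro q
    apply integral_mono (hint_ind q) hf_int
    intro e
    by_cases h : G (q.2, e) ≤ q.1 <;> simp [h, hf_nonneg e]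
  -- limits
  have hlim_top : ∀ x : E, Tendsto (fun y => ∫ e, if G (x, e) ≤ y then f e else 0)
      atTop (𝓝 (∫ e, f e)) := by
    intro x
    apply tendsto_integral_filter_of_dominated_convergence f
    · filter_upwards with y
      exact (hint_ind (y, x)).aestronglyMeasurable
    · filter_upwards with y
      filter_upwards with e
      by_cases h : G (x, e) ≤ y <;>
        simp [h, abs_of_nonneg (hf_nonneg e), hf_nonneg e, hfB e, le_refl]
    · exact hf_int
    · filter_upwards with e
      apply Tendsto.congr' _ (tendsto_const_nhds (x := f e))
      filter_upwards [eventually_ge_atTop (G (x, e))] with y hy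
      simp [hy]
  have hlim_bot : ∀ x : E, Tendsto (fun y => ∫ e, if G (x, e) ≤ y then f e else 0)
      atBot (𝓝 0) := by
    intro x
    have key : Tendsto (fun y => ∫ e, if G (x, e) ≤ y then f e else 0)
        atBot (𝓝 (∫ _ : ℝ, (0:ℝ))) := by
      apply tendsto_integral_filter_of_dominated_convergence f
      · filter_upwards with y
        exact (hint_ind (y, x)).aestronglyMeasurable
      · filter_upwards with y
        filter_upwards with e
        by_cases h : G (x, e) ≤ y <;>
          simp [h, abs_of_nonneg (hf_nonneg e), hf_nonneg e, hfB e, le_refl]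
      · exact hf_int
      · filter_upwards with e
        apply Tendsto.congr' _ (tendsto_const_nhds (x := (0:ℝ)))
        filter_upwards [eventually_lt_atBot (G (x, e))] with y hy
        simp [not_le.2 hy]
    simpa using key
  exact ⟨hWC, hWbd, hW_nonneg, hW_le, hlim_top, hlim_bot⟩

end PerShock

section ParamIntegral
variable {Q : Type*} [NormedAddCommGroup Q] [NormedSpace ℝ Q] [FiniteDimensional ℝ Q]
  {α : Type*} [MeasurableSpace α] {μ : Measure α}

theorem contDiff_integral (F : Q → α → ℝ)
    (hInt : ∀ q, Integrable (F q) μ)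
    (hsm : ∀ a, ContDiff ℝ 1 (fun q => F q a))
    (κ : α → ℝ) (hκ : Integrable κ μ)
    (hbd : ∀ q a, ‖fderiv ℝ (fun q' => F q' a) q‖ ≤ κ a) :
    ContDiff ℝ 1 (fun q => ∫ a, F q a ∂μ) := by
  have hder : ∀ (a : α) (q : Q),
      HasFDerivAt (fun q' => F q' a) (fderiv ℝ (fun q' => F q' a) q) q := fun a q =>
    (((hsm a).differentiable one_ne_zero) q).hasFDerivAt
  -- measurability of the derivative
  have F'meas : ∀ q₀ : Q, AEStronglyMeasurable (fun a => fderiv ℝ (fun q' => F q' a) q₀) μ := by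
    intro q₀
    set b := Module.finBasis ℝ Q with hb
    set Cb : Fin (Module.finrank ℝ Q) → (Q →L[ℝ] ℝ) :=
      fun i => LinearMap.toContinuousLinearMap (b.coord i) with hCb
    have recon : ∀ L : Q →L[ℝ] ℝ, L = ∑ i, L (b i) • Cb i := by
      intro L
      ext v
      have hv : (∑ i, b.repr v i • b i) = v := b.sum_repr v
      have : (∑ i, L (b i) • Cb i) v = ∑ i, b.repr v i * L (b i) := by
        rw [ContinuousLinearMap.sum_apply]
        congr 1
        funext i
        simp [hCb, Module.Basis.coord_apply, mul_comm]
      rw [this]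
      conv_lhs => rw [← hv]
      rw [map_sum]
      congr 1
      funext i
      rw [_root_.map_smul, smul_eq_mul]
    have coefmeas : ∀ v : Q,
        AEStronglyMeasurable (fun a => fderiv ℝ (fun q' => F q' a) q₀ v) μ := by
      intro v
      set u : ℕ → ℝ := fun n => ((n : ℝ) + 1)⁻¹ with hu
      have hu0 : Tendsto u atTop (𝓝[≠] (0:ℝ)) := by
        apply tendsto_nhdsWithin_of_tendsto_nhds_of_eventually_within
        · have := tendsto_one_div_add_atTop_nhds_zero_nat (𝕜 := ℝ)
          simpa [hu, one_div] using this
        · filter_upwards with n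
          simp only [mem_compl_iff, mem_singleton_iff, hu]
          positivity
      have hg : ∀ n, AEStronglyMeasurable
          (fun a => (F (q₀ + u n • v) a - F q₀ a) / u n) μ := by
        intro n
        exact (((hInt (q₀ + u n • v)).sub (hInt q₀)).div_const (u n)).aestronglyMeasurable
      apply aestronglyMeasurable_of_tendsto_ae atTop hg
      filter_upwards with a
      have hline : HasDerivAt (fun t : ℝ => F (q₀ + t • v) a)
          (fderiv ℝ (fun q' => F q' a) q₀ v) 0 := by
        have hl : HasDerivAt (fun t : ℝ => q₀ + t • v) v 0 := by
          simpa using ((hasDerivAt_id (0:ℝ)).smul_const v).const_add q₀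
        have hpt : HasFDerivAt (fun q' => F q' a) (fderiv ℝ (fun q' => F q' a) q₀)
            (q₀ + (0:ℝ) • v) := by simpa using hder a q₀
        have := hpt.comp_hasDerivAt (0:ℝ) hl
        exact this
      have hslope := hasDerivAt_iff_tendsto_slope.1 hline
      have := hslope.comp hu0
      apply this.congr
      intro n
      rw [Function.comp_apply, slope_def_field]
      simp
    have : (fun a => fderiv ℝ (fun q' => F q' a) q₀)
        = fun a => ∑ i, (fderiv ℝ (fun q' => F q' a) q₀ (b i)) • Cb i := by
      funext a; exact recon _
    rw [this]
    apply Finset.aestronglyMeasurable_fun_sum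
    intro i _
    exact (coefmeas (b i)).smul aestronglyMeasurable_const
  -- differentiation under the integral sign
  have hκ0 : ∀ a, 0 ≤ κ a := fun a => (norm_nonneg _).trans (hbd 0 a)
  have hfd : ∀ q₀ : Q, HasFDerivAt (fun q => ∫ a, F q a ∂μ)
      (∫ a, fderiv ℝ (fun q' => F q' a) q₀ ∂μ) q₀ := by
    intro q₀
    refine (hasFDerivAt_integral_of_dominated_loc_of_lip' (s := ball q₀ 1) (ball_mem_nhds q₀ one_pos)
      (fun x _ => (hInt x).aestronglyMeasurable) (hInt q₀) (F'meas q₀) ?_ hκ ?_).2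
    · filter_upwards with a
      intro x hx
      have := Convex.norm_image_sub_le_of_norm_fderiv_le
        (f := fun q' => F q' a) (C := κ a) (s := ball q₀ 1)
        (fun z _ => ((hsm a).differentiable one_ne_zero) z)
        (fun z _ => hbd z a) (convex_ball q₀ 1) (mem_ball_self one_pos) hx
      simpa using this
    · filter_upwards with a
      exact hder a q₀
  have hDiff : Differentiable ℝ (fun q => ∫ a, F q a ∂μ) :=
    fun q => (hfd q).differentiableAt
  rw [contDiff_one_iff_fderiv]
  refine ⟨hDiff, ?_⟩
  have hfeq : fderiv ℝ (fun q => ∫ a, F q a ∂μ)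
      = fun q => ∫ a, fderiv ℝ (fun q' => F q' a) q ∂μ := by
    funext q; exact (hfd q).fderiv
  rw [hfeq]
  rw [continuous_iff_continuousAt]
  intro q₀
  apply tendsto_integral_filter_of_dominated_convergence κ
  · filter_upwards with q
    exact F'meas q
  · filter_upwards with q
    filter_upwards with a
    exact hbd q a
  · exact hκ
  · filter_upwards with a
    exact (((hsm a).continuous_fderiv one_ne_zero).tendsto q₀)

section Chain
variable {E : Type*} [NormedAddCommGroup E] [NormedSpace ℝ E]

theorem chain_facts (ψ1 : ℝ → ℝ) (K : ℝ) (hK : 0 < K)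
    (hψs : ContDiff ℝ 1 ψ1) (hψlb : ∀ y, 1/K ≤ deriv ψ1 y) (hψub : ∀ y, deriv ψ1 y ≤ K)
    (f : E × ℝ → ℝ) (C : ℝ) (hC : 0 < C) (hfs : ContDiff ℝ 1 f)
    (hfe : ∀ x e, 1/C ≤ deriv (fun e' => f (x, e')) e)
    (hfx : ∀ x e, ‖fderiv ℝ (fun x' => f (x', e)) x‖ ≤ C)
    (x₂ : E) (e : ℝ) :
    ContDiff ℝ 1 (fun q : E × ℝ => ψ1 (f q)) ∧
    deriv (fun e' => ψ1 (f (x₂, e'))) e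
      = deriv ψ1 (f (x₂, e)) * deriv (fun e' => f (x₂, e')) e ∧
    1 / (K * C) ≤ deriv (fun e' => ψ1 (f (x₂, e'))) e ∧
    fderiv ℝ (fun z => ψ1 (f (z, e))) x₂
      = deriv ψ1 (f (x₂, e)) • fderiv ℝ (fun z => f (z, e)) x₂ ∧
    ‖fderiv ℝ (fun z => ψ1 (f (z, e))) x₂‖
      = deriv ψ1 (f (x₂, e)) * ‖fderiv ℝ (fun z => f (z, e)) x₂‖ ∧
    ‖fderiv ℝ (fun z => ψ1 (f (z, e))) x₂‖ ≤ K * C := by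
  have hψd : Differentiable ℝ ψ1 := hψs.differentiable one_ne_zero
  have hψpos : ∀ y, 0 < deriv ψ1 y := fun y =>
    lt_of_lt_of_le (by positivity) (hψlb y)
  have hfs_e : ContDiff ℝ 1 (fun e' => f (x₂, e')) := hfs.comp (contDiff_const.prodMk contDiff_id)
  have hfs_x : ContDiff ℝ 1 (fun z : E => f (z, e)) := hfs.comp (contDiff_id.prodMk contDiff_const)
  have hcomp : ContDiff ℝ 1 (fun q : E × ℝ => ψ1 (f q)) := hψs.comp hfs
  have hchain : deriv (fun e' => ψ1 (f (x₂, e'))) e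
      = deriv ψ1 (f (x₂, e)) * deriv (fun e' => f (x₂, e')) e := by
    have heq : (fun e' => ψ1 (f (x₂, e'))) = ψ1 ∘ (fun e' => f (x₂, e')) := rfl
    rw [heq, deriv_comp e (hψd _) ((hfs_e.differentiable one_ne_zero) e)]
  have hepos : 0 < deriv (fun e' => f (x₂, e')) e :=
    lt_of_lt_of_le (by positivity) (hfe x₂ e)
  have hlow : 1 / (K * C) ≤ deriv (fun e' => ψ1 (f (x₂, e'))) e := by
    rw [hchain]
    have h1 : 1/K ≤ deriv ψ1 (f (x₂, e)) := hψlb _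
    have h2 : 1/C ≤ deriv (fun e' => f (x₂, e')) e := hfe x₂ e
    calc 1 / (K * C) = (1/K) * (1/C) := by field_simp
      _ ≤ deriv ψ1 (f (x₂, e)) * deriv (fun e' => f (x₂, e')) e := by
          apply mul_le_mul h1 h2 (by positivity) ((by positivity : (0:ℝ) ≤ 1/K).trans h1)
  have hfder : HasFDerivAt (fun z => ψ1 (f (z, e)))
      (deriv ψ1 (f (x₂, e)) • fderiv ℝ (fun z : E => f (z, e)) x₂) x₂ := by
    have houter : HasDerivAt ψ1 (deriv ψ1 (f (x₂, e))) (f (x₂, e)) := (hψd _).hasDerivAt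
    exact houter.comp_hasFDerivAt x₂ ((hfs_x.differentiable one_ne_zero) x₂).hasFDerivAt
  have hfdeq : fderiv ℝ (fun z => ψ1 (f (z, e))) x₂
      = deriv ψ1 (f (x₂, e)) • fderiv ℝ (fun z : E => f (z, e)) x₂ := hfder.fderiv
  have hnorm : ‖fderiv ℝ (fun z => ψ1 (f (z, e))) x₂‖
      = deriv ψ1 (f (x₂, e)) * ‖fderiv ℝ (fun z : E => f (z, e)) x₂‖ := by
    rw [hfdeq, norm_smul, Real.norm_eq_abs, abs_of_pos (hψpos _)]
  refine ⟨hcomp, hchain, hlow, hfdeq, hnorm, ?_⟩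
  rw [hnorm]
  exact mul_le_mul (hψub _) (hfx x₂ e) (norm_nonneg _) hK.le

end Chain

/-- Corollary: quantiles of transformations `Ỹ = ψ(Y₁,Y₂)` of the
dependent variables.  The composite `g(x₁,x₂,(ht,a,v₁),e) = ψ(φ(x₁,v₁,a), φ(x₂,ht,e,a))`
is continuously differentiable in `(x₂,e)` with `∂_e g = ∂_{y₂}ψ · ∂_e φ ≥ 1/(KC)` and
`‖∂_{x₂} g‖ = ∂_{y₂}ψ · ‖∂_x φ‖ ≤ KC`; hence, if the conditional density of `Ỹ` given
`X₁ = x₁, X₂ = x₂` is positive everywhere, then for every `τ ∈ (0,1)` the conditional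
`τ`-quantile `q̃(τ,x₁,x₂)` of `Ỹ` exists, is continuously differentiable in `x₂`, and
`∂_{x₂} q̃ = −∂_{x₂}H̃/∂_y H̃`, the conditional average of `∂_{y₂}ψ(Y₁,Y₂)·∂_x φ(x₂,V₂,A)`
on the corresponding quantile level set. -/
theorem quantile_of_transformation
    (k m p : ℕ) (hk : 1 ≤ k)
    (ψ : ℝ → ℝ → ℝ) (K : ℝ) (hK : 0 < K)
    (hψ_smooth : ∀ y₁, ContDiff ℝ 1 (fun y₂ => ψ y₁ y₂))
    (hψ_lb : ∀ y₁ y₂, 1 / K ≤ deriv (fun y => ψ y₁ y) y₂)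
    (hψ_ub : ∀ y₁ y₂, deriv (fun y => ψ y₁ y) y₂ ≤ K)
    (φ : EuclideanSpace ℝ (Fin k) → EuclideanSpace ℝ (Fin m) → ℝ →
      EuclideanSpace ℝ (Fin p) → ℝ)
    (C : ℝ) (hC : 0 < C)
    (hφ_smooth : ∀ ht a, ContDiff ℝ 1
      (fun q : EuclideanSpace ℝ (Fin k) × ℝ => φ q.1 ht q.2 a))
    (hφe : ∀ x ht e a, 1 / C ≤ deriv (fun e' => φ x ht e' a) e)
    (hφx : ∀ x ht e a, ‖fderiv ℝ (fun x' => φ x' ht e a) x‖ ≤ C)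
    -- the "remaining" unobservables h = (ht, a, v₁) with v₁ = (ht1, e₁)
    (fE : ℝ → (EuclideanSpace ℝ (Fin m) × EuclideanSpace ℝ (Fin p) ×
      (EuclideanSpace ℝ (Fin m) × ℝ)) → EuclideanSpace ℝ (Fin k) → ℝ)
    (hfE_nonneg : ∀ e h x₁, 0 ≤ fE e h x₁)
    (hfE_prob : ∀ h x₁, ∫ e, fE e h x₁ = 1)
    (B : ℝ) (hfE_bdd : ∀ e h x₁, fE e h x₁ ≤ B)
    (hfE_cont : ∀ h x₁, Continuous (fun e => fE e h x₁))
    (fH : (EuclideanSpace ℝ (Fin m) × EuclideanSpace ℝ (Fin p) ×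
      (EuclideanSpace ℝ (Fin m) × ℝ)) → EuclideanSpace ℝ (Fin k) → ℝ)
    (hfH_nonneg : ∀ h x₁, 0 ≤ fH h x₁)
    (hfH_prob : ∀ x₁, ∫ h, fH h x₁ = 1)
    -- conditional CDF of Ỹ = ψ(Y₁,Y₂) given X₁ = x₁, X₂ = x₂
    (H : ℝ → EuclideanSpace ℝ (Fin k) → EuclideanSpace ℝ (Fin k) → ℝ)
    (hH : ∀ y x₁ x₂, H y x₁ x₂
      = ∫ h : EuclideanSpace ℝ (Fin m) × EuclideanSpace ℝ (Fin p) ×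
          (EuclideanSpace ℝ (Fin m) × ℝ),
          (∫ e, if ψ (φ x₁ h.2.2.1 h.2.2.2 h.2.1) (φ x₂ h.1 e h.2.1) ≤ y
            then fE e h x₁ else 0) * fH h x₁)
    -- positivity of the conditional density of Ỹ given X₁ = x₁, X₂ = x₂
    (hpos : ∀ (y : ℝ) (x₁ x₂ : EuclideanSpace ℝ (Fin k)),
      0 < deriv (fun y' => H y' x₁ x₂) y) :
    -- chain-rule properties of the composite structural function g
    (∀ (x₁ x₂ : EuclideanSpace ℝ (Fin k))
      (h : EuclideanSpace ℝ (Fin m) × EuclideanSpace ℝ (Fin p) ×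
        (EuclideanSpace ℝ (Fin m) × ℝ)) (e : ℝ),
      ContDiff ℝ 1 (fun q : EuclideanSpace ℝ (Fin k) × ℝ =>
        ψ (φ x₁ h.2.2.1 h.2.2.2 h.2.1) (φ q.1 h.1 q.2 h.2.1)) ∧
      deriv (fun e' => ψ (φ x₁ h.2.2.1 h.2.2.2 h.2.1) (φ x₂ h.1 e' h.2.1)) e
        = deriv (fun y => ψ (φ x₁ h.2.2.1 h.2.2.2 h.2.1) y) (φ x₂ h.1 e h.2.1)
          * deriv (fun e' => φ x₂ h.1 e' h.2.1) e ∧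
      1 / (K * C)
        ≤ deriv (fun e' => ψ (φ x₁ h.2.2.1 h.2.2.2 h.2.1) (φ x₂ h.1 e' h.2.1)) e ∧
      fderiv ℝ (fun z => ψ (φ x₁ h.2.2.1 h.2.2.2 h.2.1) (φ z h.1 e h.2.1)) x₂
        = deriv (fun y => ψ (φ x₁ h.2.2.1 h.2.2.2 h.2.1) y) (φ x₂ h.1 e h.2.1)
          • fderiv ℝ (fun z => φ z h.1 e h.2.1) x₂ ∧
      ‖fderiv ℝ (fun z => ψ (φ x₁ h.2.2.1 h.2.2.2 h.2.1) (φ z h.1 e h.2.1)) x₂‖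
        = deriv (fun y => ψ (φ x₁ h.2.2.1 h.2.2.2 h.2.1) y) (φ x₂ h.1 e h.2.1)
          * ‖fderiv ℝ (fun z => φ z h.1 e h.2.1) x₂‖ ∧
      ‖fderiv ℝ (fun z => ψ (φ x₁ h.2.2.1 h.2.2.2 h.2.1) (φ z h.1 e h.2.1)) x₂‖
        ≤ K * C) ∧
    -- existence, uniqueness, smoothness and derivative of the conditional quantile of Ỹ
    (∃ qt : ℝ → EuclideanSpace ℝ (Fin k) → EuclideanSpace ℝ (Fin k) → ℝ,
      ∀ τ : ℝ, 0 < τ → τ < 1 → ∀ x₁ : EuclideanSpace ℝ (Fin k),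
        (∀ x₂, H (qt τ x₁ x₂) x₁ x₂ = τ ∧ ∀ y, H y x₁ x₂ = τ → y = qt τ x₁ x₂) ∧
        ContDiff ℝ 1 (fun z => qt τ x₁ z) ∧
        ∀ x₂ : EuclideanSpace ℝ (Fin k),
          fderiv ℝ (fun z => qt τ x₁ z) x₂
            = -(deriv (fun y => H y x₁ x₂) (qt τ x₁ x₂))⁻¹ •
                fderiv ℝ (fun z => H (qt τ x₁ x₂) x₁ z) x₂) := by
  classical
  have hg : ∀ (x₁ x₂ : EuclideanSpace ℝ (Fin k))
      (h : EuclideanSpace ℝ (Fin m) × EuclideanSpace ℝ (Fin p) ×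
        (EuclideanSpace ℝ (Fin m) × ℝ)) (e : ℝ),
      ContDiff ℝ 1 (fun q : EuclideanSpace ℝ (Fin k) × ℝ =>
        ψ (φ x₁ h.2.2.1 h.2.2.2 h.2.1) (φ q.1 h.1 q.2 h.2.1)) ∧
      deriv (fun e' => ψ (φ x₁ h.2.2.1 h.2.2.2 h.2.1) (φ x₂ h.1 e' h.2.1)) e
        = deriv (fun y => ψ (φ x₁ h.2.2.1 h.2.2.2 h.2.1) y) (φ x₂ h.1 e h.2.1)
          * deriv (fun e' => φ x₂ h.1 e' h.2.1) e ∧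
      1 / (K * C)
        ≤ deriv (fun e' => ψ (φ x₁ h.2.2.1 h.2.2.2 h.2.1) (φ x₂ h.1 e' h.2.1)) e ∧
      fderiv ℝ (fun z => ψ (φ x₁ h.2.2.1 h.2.2.2 h.2.1) (φ z h.1 e h.2.1)) x₂
        = deriv (fun y => ψ (φ x₁ h.2.2.1 h.2.2.2 h.2.1) y) (φ x₂ h.1 e h.2.1)
          • fderiv ℝ (fun z => φ z h.1 e h.2.1) x₂ ∧
      ‖fderiv ℝ (fun z => ψ (φ x₁ h.2.2.1 h.2.2.2 h.2.1) (φ z h.1 e h.2.1)) x₂‖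
        = deriv (fun y => ψ (φ x₁ h.2.2.1 h.2.2.2 h.2.1) y) (φ x₂ h.1 e h.2.1)
          * ‖fderiv ℝ (fun z => φ z h.1 e h.2.1) x₂‖ ∧
      ‖fderiv ℝ (fun z => ψ (φ x₁ h.2.2.1 h.2.2.2 h.2.1) (φ z h.1 e h.2.1)) x₂‖
        ≤ K * C := by
    intro x₁ x₂ h e
    exact chain_facts (fun y => ψ (φ x₁ h.2.2.1 h.2.2.2 h.2.1) y) K hK
      (hψ_smooth _) (hψ_lb _) (hψ_ub _)
      (fun q => φ q.1 h.1 q.2 h.2.1) C hC (hφ_smooth h.1 h.2.1)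
      (fun x e' => hφe x h.1 e' h.2.1) (fun x e' => hφx x h.1 e' h.2.1) x₂ e
  refine ⟨fun x₁ x₂ h e => hg x₁ x₂ h e, ?_⟩
  -- quantitative constants
  have hδ0 : (0:ℝ) < 1 / (K * C) := by positivity
  -- per (τ, x₁) construction of the quantile function
  have main : ∀ (τ : ℝ) (x₁ : EuclideanSpace ℝ (Fin k)),
      ∃ r : EuclideanSpace ℝ (Fin k) → ℝ, 0 < τ → τ < 1 →
      ((∀ x₂, H (r x₂) x₁ x₂ = τ ∧ ∀ y, H y x₁ x₂ = τ → y = r x₂) ∧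
        ContDiff ℝ 1 (fun z => r z) ∧
        ∀ x₂ : EuclideanSpace ℝ (Fin k),
          fderiv ℝ (fun z => r z) x₂
            = -(deriv (fun y => H y x₁ x₂) (r x₂))⁻¹ •
                fderiv ℝ (fun z => H (r x₂) x₁ z) x₂) := by
    intro τ x₁
    by_cases hτ : 0 < τ ∧ τ < 1
    swap
    · exact ⟨fun _ => 0, fun h1 h2 => absurd ⟨h1, h2⟩ hτ⟩
    obtain ⟨hτ0, hτ1⟩ := hτ
    -- integrability of the densities
    have hfE_int : ∀ h, Integrable (fun e => fE e h x₁) := by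
      intro h
      by_contra hni
      exact one_ne_zero ((hfE_prob h x₁).symm.trans (integral_undef hni))
    have hfH_int : Integrable (fun h => fH h x₁) := by
      by_contra hni
      exact one_ne_zero ((hfH_prob x₁).symm.trans (integral_undef hni))
    -- the per-shock inner CDF
    set W : ℝ × EuclideanSpace ℝ (Fin k) →
        (EuclideanSpace ℝ (Fin m) × EuclideanSpace ℝ (Fin p) ×
          (EuclideanSpace ℝ (Fin m) × ℝ)) → ℝ :=
      fun q h => ∫ e, if ψ (φ x₁ h.2.2.1 h.2.2.2 h.2.1) (φ q.2 h.1 e h.2.1) ≤ q.1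
        then fE e h x₁ else 0 with hWdef
    have hfacts : ∀ h,
        ContDiff ℝ 1 (fun q : ℝ × EuclideanSpace ℝ (Fin k) => W q h) ∧
        (∀ q, ‖fderiv ℝ (fun q' => W q' h) q‖ ≤ B * ((1 + K * C) / (1 / (K * C)))) ∧
        (∀ q, 0 ≤ W q h) ∧ (∀ q, W q h ≤ 1) ∧
        (∀ x₂, Filter.Tendsto (fun y => W (y, x₂) h) Filter.atTop (nhds 1)) ∧
        (∀ x₂, Filter.Tendsto (fun y => W (y, x₂) h) Filter.atBot (nhds 0)) := by
      intro h
      obtain ⟨h1, h2, h3, h4, h5, h6⟩ := cdf_slice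
        (fun q : EuclideanSpace ℝ (Fin k) × ℝ =>
          ψ (φ x₁ h.2.2.1 h.2.2.2 h.2.1) (φ q.1 h.1 q.2 h.2.1))
        (hg x₁ x₁ h 0).1 (1 / (K * C)) (K * C) hδ0
        (fun x e => (hg x₁ x h e).2.2.1)
        (fun x e => (hg x₁ x h e).2.2.2.2.2)
        (fun e => fE e h x₁) (hfE_cont h x₁) (fun e => hfE_nonneg e h x₁)
        B (fun e => hfE_bdd e h x₁) (hfE_int h)
      refine ⟨h1, h2, h3, fun q => (h4 q).trans_eq (hfE_prob h x₁), fun x₂ => ?_, h6⟩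
      have := h5 x₂
      rw [hfE_prob h x₁] at this
      exact this
    -- the conditional CDF as an integral of W
    have hHeq : ∀ q : ℝ × EuclideanSpace ℝ (Fin k),
        H q.1 x₁ q.2 = ∫ h, W q h * fH h x₁ := fun q => hH q.1 x₁ q.2
    have hHnn : ∀ (y : ℝ) (x₂ : EuclideanSpace ℝ (Fin k)), 0 ≤ H y x₁ x₂ := by
      intro y x₂
      rw [hH y x₁ x₂]
      apply integral_nonneg
      intro h
      apply mul_nonneg _ (hfH_nonneg h x₁)
      apply integral_nonneg
      intro e
      by_cases hc : ψ (φ x₁ h.2.2.1 h.2.2.2 h.2.1) (φ x₂ h.1 e h.2.1) ≤ y <;>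
        simp [hc, hfE_nonneg e h x₁]
    -- integrability of the h-integrand at every point, from positivity of the density
    have hFint : ∀ q : ℝ × EuclideanSpace ℝ (Fin k),
        Integrable (fun h => W q h * fH h x₁) := by
      intro q
      by_contra hni
      have h0 : H q.1 x₁ q.2 = 0 := (hHeq q).trans (integral_undef hni)
      have hmin : IsLocalMin (fun y => H y x₁ q.2) q.1 := by
        apply Filter.Eventually.of_forall
        intro y
        show H q.1 x₁ q.2 ≤ H y x₁ q.2
        rw [h0]
        exact hHnn y q.2
      have := hpos q.1 x₁ q.2
      rw [hmin.deriv_eq_zero] at this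
      exact lt_irrefl _ this
    -- joint C¹ smoothness of the conditional CDF
    have HC : ContDiff ℝ 1 (fun q : ℝ × EuclideanSpace ℝ (Fin k) => H q.1 x₁ q.2) := by
      have key := contDiff_integral (μ := (volume : Measure
          (EuclideanSpace ℝ (Fin m) × EuclideanSpace ℝ (Fin p) ×
            (EuclideanSpace ℝ (Fin m) × ℝ))))
        (fun q h => W q h * fH h x₁) hFint
        (fun h => ((hfacts h).1.mul contDiff_const))
        (fun h => (B * ((1 + K * C) / (1 / (K * C)))) * fH h x₁)
        (hfH_int.const_mul _) ?_
      · have heq : (fun q : ℝ × EuclideanSpace ℝ (Fin k) => H q.1 x₁ q.2)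
            = fun q => ∫ h, W q h * fH h x₁ := funext hHeq
        rw [heq]
        exact key
      · intro q h
        have hdW : DifferentiableAt ℝ (fun q' => W q' h) q :=
          ((hfacts h).1.differentiable one_ne_zero) q
        rw [fderiv_mul_const hdW (fH h x₁), norm_smul, Real.norm_eq_abs,
          abs_of_nonneg (hfH_nonneg h x₁), mul_comm]
        exact mul_le_mul ((hfacts h).2.1 q) le_rfl (hfH_nonneg h x₁)
          (le_trans (norm_nonneg _) ((hfacts h).2.1 q))
    -- strict monotonicity in y
    have hmonoH : ∀ x₂ : EuclideanSpace ℝ (Fin k), StrictMono (fun y => H y x₁ x₂) :=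
      fun x₂ => strictMono_of_deriv_pos (fun y => hpos y x₁ x₂)
    -- limits of the conditional CDF
    have htop : ∀ x₂ : EuclideanSpace ℝ (Fin k),
        Filter.Tendsto (fun y => H y x₁ x₂) Filter.atTop (nhds 1) := by
      intro x₂
      have key : Filter.Tendsto (fun y => ∫ h, W (y, x₂) h * fH h x₁)
          Filter.atTop (nhds (∫ h, fH h x₁)) := by
        apply tendsto_integral_filter_of_dominated_convergence (fun h => fH h x₁)
        · filter_upwards with y
          exact (hFint (y, x₂)).aestronglyMeasurable
        · filter_upwards with y
          filter_upwards with h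
          rw [Real.norm_eq_abs, abs_mul, abs_of_nonneg ((hfacts h).2.2.1 (y, x₂)),
            abs_of_nonneg (hfH_nonneg h x₁)]
          calc W (y, x₂) h * fH h x₁ ≤ 1 * fH h x₁ :=
                mul_le_mul_of_nonneg_right ((hfacts h).2.2.2.1 (y, x₂)) (hfH_nonneg h x₁)
            _ = fH h x₁ := one_mul _
        · exact hfH_int
        · filter_upwards with h
          have := ((hfacts h).2.2.2.2.1 x₂).mul_const (fH h x₁)
          simpa using this
      rw [hfH_prob x₁] at key
      exact key.congr (fun y => (hHeq (y, x₂)).symm)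
    have hbot : ∀ x₂ : EuclideanSpace ℝ (Fin k),
        Filter.Tendsto (fun y => H y x₁ x₂) Filter.atBot (nhds 0) := by
      intro x₂
      have key : Filter.Tendsto (fun y => ∫ h, W (y, x₂) h * fH h x₁)
          Filter.atBot (nhds (∫ _ : EuclideanSpace ℝ (Fin m) × EuclideanSpace ℝ (Fin p) ×
            (EuclideanSpace ℝ (Fin m) × ℝ), (0:ℝ))) := by
        apply tendsto_integral_filter_of_dominated_convergence (fun h => fH h x₁)
        · filter_upwards with y
          exact (hFint (y, x₂)).aestronglyMeasurable
        · filter_upwards with y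
          filter_upwards with h
          rw [Real.norm_eq_abs, abs_mul, abs_of_nonneg ((hfacts h).2.2.1 (y, x₂)),
            abs_of_nonneg (hfH_nonneg h x₁)]
          calc W (y, x₂) h * fH h x₁ ≤ 1 * fH h x₁ :=
                mul_le_mul_of_nonneg_right ((hfacts h).2.2.2.1 (y, x₂)) (hfH_nonneg h x₁)
            _ = fH h x₁ := one_mul _
        · exact hfH_int
        · filter_upwards with h
          have := ((hfacts h).2.2.2.2.2 x₂).mul_const (fH h x₁)
          simpa using this
      simp only [integral_zero] at key
      exact key.congr (fun y => (hHeq (y, x₂)).symm)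
    -- existence of the quantile
    have hex : ∀ x₂ : EuclideanSpace ℝ (Fin k), ∃ y, H y x₁ x₂ = τ := by
      intro x₂
      obtain ⟨a, ha⟩ := ((htop x₂).eventually (lt_mem_nhds hτ1)).exists
      obtain ⟨b, hb⟩ := ((hbot x₂).eventually (gt_mem_nhds hτ0)).exists
      have hba : b ≤ a := by
        by_contra hc
        push_neg at hc
        have := (hmonoH x₂) hc
        simp only at this
        linarith
      have hcont : Continuous (fun y => H y x₁ x₂) := by
        have := HC.continuous.comp (continuous_id.prodMk
          (continuous_const : Continuous (fun _ : ℝ => x₂)))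
        exact this
      have hmem : τ ∈ Icc (H b x₁ x₂) (H a x₁ x₂) := ⟨hb.le, ha.le⟩
      obtain ⟨y, _, hy⟩ := intermediate_value_Icc hba hcont.continuousOn hmem
      exact ⟨y, hy⟩
    -- global implicit function theorem
    obtain ⟨r, hrC, hr_eq, hr_uniq, hr_fderiv⟩ :=
      implicit_global (P := EuclideanSpace ℝ (Fin k))
        (fun z => H z.2 x₁ z.1)
        (HC.comp (contDiff_snd.prodMk contDiff_fst))
        (fun q => hpos q.2 x₁ q.1) τ hex
    exact ⟨r, fun _ _ =>
      ⟨fun x₂ => ⟨hr_eq x₂, fun y hy => hr_uniq x₂ y hy⟩, hrC, hr_fderiv⟩⟩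

  choose r hr using main
  refine ⟨fun τ x₁ x₂ => r τ x₁ x₂, ?_⟩
  intro τ h1 h2 x₁
  exact hr τ x₁ h1 h2
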